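/- Let 𝒜 be a finite complete acyclic DFA recognizing L, let w ∈ A* and C ⊆ A. Then the powerset automaton of the product NFA ℬ recognizing L ↑_C w (with states Q × {0,…,|w|} and transitions (p,k) ⟶^a {(p·a,k)} ∪ {(p,k+1) if a = w[k+1]} ∪ {(p·a,k+1) if a = w[k+1] and a ∈ C}) is acyclic: every cycle in the powerset automaton is a self-loop. -/

import Mathlib

open List

variable {A : Type*}

/-- Extract the subword of `x` at positions `K`. -/
def extractW (x : List A) (K : Finset (Fin x.length)) : List A :=
  ((List.finRange x.length).filter (fun i => i ∈ K)).map x.get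

/-- `InterpW C u v x` : `x` is a shuffle of `u` and `v` with possible sharing of letters in `C`. -/
def InterpW (C : Set A) (u v x : List A) : Prop :=
  ∃ K K' : Finset (Fin x.length), K ∪ K' = Finset.univ ∧
    extractW x K = u ∧ extractW x K' = v ∧ ∀ a ∈ extractW x (K ∩ K'), a ∈ C

/-- Interpolation product of languages. -/
def interpL (C : Set A) (L L' : Set (List A)) : Set (List A) :=
  {x | ∃ u ∈ L, ∃ v ∈ L', InterpW C u v x}

/-- Shuffle product of languages. -/
def shuffleL (L L' : Set (List A)) : Set (List A) := interpL ∅ L L'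

/-- Simon's congruence: same scattered subwords of length at most `k`. -/
def SimK (k : ℕ) (u v : List A) : Prop :=
  ∀ w : List A, w.length ≤ k → (w.Sublist u ↔ w.Sublist v)

/-- Piecewise-testability: union of `∼ₖ`-classes for some `k`. -/
def PT (L : Set (List A)) : Prop :=
  ∃ k, ∀ u v : List A, SimK k u v → (u ∈ L ↔ v ∈ L)

/-- A DFA is acyclic when every cycle is a self-loop. -/
def DFA.Acyclic {σ : Type*} (M : DFA A σ) : Prop :=
  ∀ p q (u v : List A), M.evalFrom p u = q → M.evalFrom q v = p → p = q

/-- A language is ℛ-trivial iff it is recognized by a finite acyclic DFA. -/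
def RTrivial (L : Set (List A)) : Prop :=
  ∃ (σ : Type) (_ : Fintype σ) (M : DFA A σ), M.Acyclic ∧ ∀ x, x ∈ M.accepts ↔ x ∈ L

/-- The transition relation of the product NFA `ℬ` for `L ↑_C w`. -/
def Bstep {A σ : Type*} (M : DFA A σ) (w : List A) (C : Set A) :
    σ × ℕ → A → Set (σ × ℕ) := fun s a =>
  {q | q = (M.step s.1 a, s.2) ∨
    ∃ h : s.2 < w.length, w.get ⟨s.2, h⟩ = a ∧
      (q = (s.1, s.2 + 1) ∨ (a ∈ C ∧ q = (M.step s.1 a, s.2 + 1)))}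

namespace Stmt11Aux

variable {A σ : Type*}

/-- one-step "image plus injection" evolution. -/
def evolve (M : DFA A σ) (f : A → Set σ) : Set σ → List A → Set σ :=
  List.foldl (fun Y a => (fun p => M.step p a) '' Y ∪ f a)

def finj (M : DFA A σ) (f : A → Set σ) : List A → Set σ
  | [] => ∅
  | a :: x => (fun p => M.evalFrom p x) '' f a ∪ finj M f x

lemma evolve_nil (M : DFA A σ) (f : A → Set σ) (Y : Set σ) : evolve M f Y [] = Y := rfl

lemma evolve_append_singleton (M : DFA A σ) (f : A → Set σ) (Y : Set σ) (x : List A) (a : A) :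
    evolve M f Y (x ++ [a]) = (fun p => M.step p a) '' (evolve M f Y x) ∪ f a := by
  simp [evolve, List.foldl_append]

lemma evolve_eq (M : DFA A σ) (f : A → Set σ) :
    ∀ (x : List A) (Y : Set σ),
      evolve M f Y x = (fun p => M.evalFrom p x) '' Y ∪ finj M f x := by
  intro x
  induction x with
  | nil => intro Y; simp [evolve, finj, DFA.evalFrom]
  | cons a x ih =>
    intro Y
    have h1 : evolve M f Y (a :: x) = evolve M f ((fun p => M.step p a) '' Y ∪ f a) x := rfl
    rw [h1, ih]
    rw [Set.image_union, Set.image_image]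
    have : (fun p => M.evalFrom p x) ∘ (fun p => M.step p a) = fun p => M.evalFrom p (a :: x) := rfl
    simp only [finj, Set.union_assoc]
    rfl

lemma evalFrom_of_fixed (M : DFA A σ) {p : σ} {x : List A}
    (h : ∀ a ∈ x, M.step p a = p) : M.evalFrom p x = p := by
  induction x with
  | nil => rfl
  | cons a x ih =>
    have : M.evalFrom p (a :: x) = M.evalFrom (M.step p a) x := rfl
    rw [this, h a List.mem_cons_self]
    exact ih fun b hb => h b (List.mem_cons_of_mem a hb)

lemma image_of_fixed {g : σ → σ} {Y : Set σ} (h : ∀ p ∈ Y, g p = p) : g '' Y = Y := by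
  ext q
  constructor
  · rintro ⟨p, hp, rfl⟩; rw [h p hp]; exact hp
  · intro hq; exact ⟨q, hq, h q hq⟩

lemma finj_eq (M : DFA A σ) (f : A → Set σ) (L : List A)
    (hf : ∀ a ∈ L, ∀ p ∈ f a, ∀ b ∈ L, M.step p b = p) :
    ∀ x : List A, (∀ a ∈ x, a ∈ L) → finj M f x = {p | ∃ a ∈ x, p ∈ f a} := by
  intro x
  induction x with
  | nil => intro _; ext p; simp [finj]
  | cons a x ih =>
    intro hx
    have haL : a ∈ L := hx a List.mem_cons_self
    have hxL : ∀ b ∈ x, b ∈ L := fun b hb => hx b (List.mem_cons_of_mem a hb)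
    have himg : (fun p => M.evalFrom p x) '' f a = f a :=
      image_of_fixed fun p hp => evalFrom_of_fixed M fun b hb => hf a haL p hp b (hxL b hb)
    show (fun p => M.evalFrom p x) '' f a ∪ finj M f x = _
    rw [himg, ih hxL]
    ext p
    simp only [Set.mem_union, Set.mem_setOf_eq, List.mem_cons]
    constructor
    · rintro (h | ⟨b, hb, hpb⟩)
      exacts [⟨a, Or.inl rfl, h⟩, ⟨b, Or.inr hb, hpb⟩]
    · rintro ⟨b, (rfl | hb), hpb⟩
      exacts [Or.inl hpb, Or.inr ⟨b, hb, hpb⟩]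

/-- strict reachability relation -/
lemma evalFrom_append (M : DFA A σ) (p : σ) (x y : List A) :
    M.evalFrom p (x ++ y) = M.evalFrom (M.evalFrom p x) y := by
  simp [DFA.evalFrom, List.foldl_append]

/-- strict reachability relation -/
def relBelow (M : DFA A σ) (p q : σ) : Prop := p ≠ q ∧ ∃ x : List A, M.evalFrom p x = q

lemma relBelow_wf [Finite σ] (M : DFA A σ)
    (hac : ∀ p q (u v : List A), M.evalFrom p u = q → M.evalFrom q v = p → p = q) :
    WellFounded (relBelow M) := by
  have ht : IsTrans σ (relBelow M) := by
    constructor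
    rintro p q r ⟨hpq, x, hx⟩ ⟨hqr, y, hy⟩
    refine ⟨?_, x ++ y, ?_⟩
    · intro hpr
      exact hpq (hac p q x y hx (hpr ▸ hy))
    · rw [evalFrom_append, hx, hy]
  have hi : IsIrrefl σ (relBelow M) := ⟨fun p h => h.1 rfl⟩
  exact Finite.wellFounded_of_trans_of_irrefl _

lemma evolve_fixed [Finite σ] (M : DFA A σ)
    (hac : ∀ p q (u v : List A), M.evalFrom p u = q → M.evalFrom q v = p → p = q)
    (L : List A) (f : A → Set σ)
    (hf : ∀ a ∈ L, ∀ p ∈ f a, ∀ b ∈ L, M.step p b = p)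
    (Y : Set σ) (hY : evolve M f Y L = Y) :
    (∀ p ∈ Y, ∀ a ∈ L, M.step p a = p) ∧ ∀ x y, L = x ++ y → evolve M f Y x = Y := by
  rw [evolve_eq, finj_eq M f L hf L (fun a ha => ha)] at hY
  have part1 : ∀ p, p ∈ Y → ∀ a ∈ L, M.step p a = p := by
    intro p
    induction p using (relBelow_wf M hac).induction with
    | _ p IH =>
      intro hp a ha
      have hp' : p ∈ (fun q => M.evalFrom q L) '' Y ∪ {p | ∃ a ∈ L, p ∈ f a} := by
        rw [hY]; exact hp
      rcases hp' with ⟨q, hq, hq2'⟩ | ⟨b, hb, hpb⟩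
      · have hq2 : M.evalFrom q L = p := hq2'
        by_cases hqp : q = p
        · subst hqp
          -- q = p : M.evalFrom p L = p, so every prefix fixes p
          obtain ⟨s, t, rfl⟩ := List.append_of_mem ha
          have h1 : M.evalFrom (M.evalFrom q s) (a :: t) = q := by
            rw [← evalFrom_append]; exact hq2
          have h2 : q = M.evalFrom q s := hac q (M.evalFrom q s) s (a :: t) rfl h1
          have h3 : M.evalFrom (M.evalFrom q (s ++ [a])) t = q := by
            rw [← evalFrom_append, show (s ++ [a]) ++ t = s ++ a :: t by simp]
            exact hq2
          have h4 : q = M.evalFrom q (s ++ [a]) :=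
            hac q (M.evalFrom q (s ++ [a])) (s ++ [a]) t rfl h3
          rw [DFA.evalFrom_append_singleton, ← h2] at h4
          exact h4.symm
        · exfalso
          have hst : ∀ b ∈ L, M.step q b = q := IH q ⟨hqp, L, hq2⟩ hq
          rw [evalFrom_of_fixed M hst] at hq2
          exact hqp hq2
      · exact hf b hb p hpb a ha
  refine ⟨part1, ?_⟩
  intro x y hxy
  have hxL : ∀ a ∈ x, a ∈ L := fun a hax => hxy ▸ List.mem_append_left y hax
  rw [evolve_eq, finj_eq M f L hf x hxL]
  have himg : (fun p => M.evalFrom p x) '' Y = Y :=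
    image_of_fixed fun p hp => evalFrom_of_fixed M fun b hb => part1 p hp b (hxL b hb)
  rw [himg]
  apply Set.union_eq_self_of_subset_right
  intro p ⟨a, hax, hpa⟩
  have : p ∈ {p | ∃ a ∈ L, p ∈ f a} := ⟨a, hxL a hax, hpa⟩
  rw [← hY]
  exact Set.mem_union_right _ this


variable {A σ : Type*}

/-- the slice of a powerset state at level `k`. -/
def slice (S : Set (σ × ℕ)) (k : ℕ) : Set σ := {p | (p, k) ∈ S}

variable (M : DFA A σ) (w : List A) (C : Set A) (st : Set (σ × ℕ)) (acc : Set (σ × ℕ))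

lemma slice_stepSet_zero (S : Set (σ × ℕ)) (a : A) :
    slice ((NFA.mk (Bstep M w C) st acc).stepSet S a) 0 =
      (fun p => M.step p a) '' slice S 0 := by
  ext p
  simp only [slice, Set.mem_setOf_eq, NFA.mem_stepSet, Set.mem_image]
  constructor
  · rintro ⟨⟨q, l⟩, hs, h⟩
    rcases h with h | ⟨h1, h2, h3 | ⟨hC, h3⟩⟩
    · rw [Prod.ext_iff] at h
      obtain ⟨hp, hl⟩ := h
      obtain rfl : l = 0 := hl.symm
      exact ⟨q, hs, hp.symm⟩
    · exact absurd (congrArg Prod.snd h3) (by simp)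
    · exact absurd (congrArg Prod.snd h3) (by simp)
  · rintro ⟨q, hq, rfl⟩
    exact ⟨(q, 0), hq, Or.inl rfl⟩

lemma slice_stepSet_succ (S : Set (σ × ℕ)) (a : A) (k : ℕ)
    (hst : ∀ p ∈ slice S k, M.step p a = p) :
    slice ((NFA.mk (Bstep M w C) st acc).stepSet S a) (k + 1) =
      (fun p => M.step p a) '' slice S (k + 1) ∪
        {p | p ∈ slice S k ∧ ∃ h : k < w.length, w.get ⟨k, h⟩ = a} := by
  ext p
  simp only [slice, Set.mem_setOf_eq, NFA.mem_stepSet, Set.mem_image, Set.mem_union]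
  constructor
  · rintro ⟨⟨q, l⟩, hs, h⟩
    rcases h with h | ⟨h1, h2, h3 | ⟨hC, h3⟩⟩
    · rw [Prod.ext_iff] at h
      obtain ⟨hp, hl⟩ := h
      obtain rfl : l = k + 1 := hl.symm
      exact Or.inl ⟨q, hs, hp.symm⟩
    · rw [Prod.ext_iff] at h3
      obtain ⟨hp, hl⟩ := h3
      simp only at h1 h2 hp hl
      have hl' : k = l := by omega
      subst hl'
      subst hp
      exact Or.inr ⟨hs, h1, h2⟩
    · rw [Prod.ext_iff] at h3
      obtain ⟨hp, hl⟩ := h3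
      simp only at h1 h2 hp hl
      have hl' : k = l := by omega
      subst hl'
      have hq : q ∈ slice S k := hs
      refine Or.inr ⟨?_, h1, h2⟩
      rw [hp, hst q hq]
      exact hq
  · rintro (⟨q, hq, rfl⟩ | ⟨hq, h1, h2⟩)
    · exact ⟨(q, k + 1), hq, Or.inl rfl⟩
    · exact ⟨(p, k), hq, Or.inr ⟨h1, h2, Or.inl rfl⟩⟩

end Stmt11Aux

theorem stmt11 {A σ : Type*} [Fintype σ] (M : DFA A σ) (hac : M.Acyclic)
    (w : List A) (C : Set A) :
    (NFA.mk (Bstep M w C) {(M.start, 0)}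
      {s : σ × ℕ | s.1 ∈ M.accept ∧ s.2 = w.length}).toDFA.Acyclic := by
  intro S T u v hu hv
  set N : NFA A (σ × ℕ) := NFA.mk (Bstep M w C) {(M.start, 0)}
      {s : σ × ℕ | s.1 ∈ M.accept ∧ s.2 = w.length} with hN
  set L : List A := u ++ v with hLdef
  have hevapp : ∀ (S' : Set (σ × ℕ)) (x y : List A),
      N.toDFA.evalFrom S' (x ++ y) = N.toDFA.evalFrom (N.toDFA.evalFrom S' x) y := by
    intro S' x y; simp [DFA.evalFrom, List.foldl_append]
  have hcycle : N.toDFA.evalFrom S L = S := by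
    rw [hLdef, hevapp, hu, hv]
  have hstep : ∀ (S' : Set (σ × ℕ)) (a : A), N.toDFA.step S' a = N.stepSet S' a :=
    fun _ _ => rfl
  have main : ∀ k : ℕ,
      (∀ p ∈ Stmt11Aux.slice S k, ∀ a ∈ L, M.step p a = p) ∧
      (∀ x y : List A, L = x ++ y →
        Stmt11Aux.slice (N.toDFA.evalFrom S x) k = Stmt11Aux.slice S k) := by
    intro k
    induction k with
    | zero =>
      have corr : ∀ (x : List A) (S' : Set (σ × ℕ)),
          Stmt11Aux.slice (N.toDFA.evalFrom S' x) 0 =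
            Stmt11Aux.evolve M (fun _ => ∅) (Stmt11Aux.slice S' 0) x := by
        intro x
        induction x with
        | nil => intro S'; rfl
        | cons a x ih =>
          intro S'
          have h1 : N.toDFA.evalFrom S' (a :: x) = N.toDFA.evalFrom (N.stepSet S' a) x := rfl
          rw [h1, ih]
          have h2 : Stmt11Aux.evolve M (fun _ => ∅) (Stmt11Aux.slice S' 0) (a :: x) =
              Stmt11Aux.evolve M (fun _ => ∅)
                ((fun p => M.step p a) '' Stmt11Aux.slice S' 0 ∪ ∅) x := rfl
          rw [h2, Stmt11Aux.slice_stepSet_zero M w C _ _ S' a, Set.union_empty]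
      have hfix := Stmt11Aux.evolve_fixed M hac L (fun _ => ∅)
        (by intro a _ p hp; exact absurd hp (Set.notMem_empty p))
        (Stmt11Aux.slice S 0) (by rw [← corr L S, hcycle])
      refine ⟨hfix.1, fun x y hxy => ?_⟩
      rw [corr x S, hfix.2 x y hxy]
    | succ k ih =>
      set f : A → Set σ :=
        fun a => {p | p ∈ Stmt11Aux.slice S k ∧ ∃ h : k < w.length, w.get ⟨k, h⟩ = a}
        with hfdef
      have hf : ∀ a ∈ L, ∀ p ∈ f a, ∀ b ∈ L, M.step p b = p :=
        fun a _ p hp b hb => ih.1 p hp.1 b hb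
      have corr : ∀ x : List A, ∀ y : List A, L = x ++ y →
          Stmt11Aux.slice (N.toDFA.evalFrom S x) (k + 1) =
            Stmt11Aux.evolve M f (Stmt11Aux.slice S (k + 1)) x := by
        intro x
        induction x using List.reverseRecOn with
        | nil => intro y hxy; rfl
        | append_singleton x a ihx =>
          intro y hxy
          have hxy' : L = x ++ (a :: y) := by rw [hxy]; simp
          have haL : a ∈ L := by rw [hxy]; simp
          have hx1 : N.toDFA.evalFrom S (x ++ [a]) = N.stepSet (N.toDFA.evalFrom S x) a := by
            rw [hevapp]; rfl
          have hsl_k : Stmt11Aux.slice (N.toDFA.evalFrom S x) k = Stmt11Aux.slice S k :=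
            ih.2 x (a :: y) hxy'
          have hst : ∀ p ∈ Stmt11Aux.slice (N.toDFA.evalFrom S x) k, M.step p a = p := by
            rw [hsl_k]; exact fun p hp => ih.1 p hp a haL
          rw [hx1, Stmt11Aux.slice_stepSet_succ M w C _ _ _ a k hst,
            Stmt11Aux.evolve_append_singleton, ihx (a :: y) hxy', hsl_k]
      have hY : Stmt11Aux.evolve M f (Stmt11Aux.slice S (k + 1)) L =
          Stmt11Aux.slice S (k + 1) := by
        rw [← corr L [] (by simp), hcycle]
      have hfix := Stmt11Aux.evolve_fixed M hac L f hf (Stmt11Aux.slice S (k + 1)) hY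
      refine ⟨hfix.1, fun x y hxy => ?_⟩
      rw [corr x y hxy, hfix.2 x y hxy]
  have hT : ∀ k : ℕ, Stmt11Aux.slice T k = Stmt11Aux.slice S k := by
    intro k
    have := (main k).2 u v rfl
    rwa [hu] at this
  ext ⟨p, k⟩
  constructor
  · intro h
    have : p ∈ Stmt11Aux.slice T k := (hT k).symm ▸ (h : p ∈ Stmt11Aux.slice S k)
    exact this
  · intro h
    have : p ∈ Stmt11Aux.slice S k := (hT k) ▸ (h : p ∈ Stmt11Aux.slice T k)
    exact this
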